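/- (Classification of singularities, pole case.) Assume i₁, i₂, i₃ are linearly independent over ℝ and f₁(E₃) = f₂(E₃) = ℂ. Let ζ₀ ∈ E₃, ξ₁₀ = f₁(ζ₀), ξ₂₀ = f₂(ζ₀), 0 < R ≤ ∞. Let F₁, F₃ be holomorphic on {ξ : 0 < |ξ − ξ₁₀| < R} and F₂, F₄ holomorphic on {ξ : 0 < |ξ − ξ₂₀| < R}, and define Φ on K⁰_ζ = {ζ ∈ E₃ : 0 < |f₁(ζ) − ξ₁₀| < R, 0 < |f₂(ζ) − ξ₂₀| < R} by Φ(ζ) = F₁(f₁(ζ))e₁ + F₂(f₂(ζ))e₂ + F₃(f₁(ζ))e₃ + F₄(f₂(ζ))e₄. If each of F₁, F₂, F₃, F₄ has only finitely many nonzero Laurent coefficients of negative index and at least one of them has a nonzero Laurent coefficient of negative index (i.e., the principal part of the Laurent expansion of Φ is nonzero but contains only finitely many terms), then there exists k ∈ {1, 2} such that at every point w ∈ K̃⁰_ζ = {ζ ∈ E₃ : |f₁(ζ) − ξ₁₀| < R, |f₂(ζ) − ξ₂₀| < R} of the form w = ζ₀ + e* with e* ∈ L^k_ζ, one has ‖Φ(ζ)‖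 → ∞ as ζ → w with ζ ranging over K⁰_ζ. -/

import Mathlib

noncomputable section

/-- The algebra of complex quaternions ℍ(ℂ): quaternions over ℂ with
I² = J² = K² = -1, IJ = -JI = K, JK = -KJ = I, KI = -IK = J. -/
abbrev HC : Type := Quaternion ℂ

/-- The quaternion unit I. -/
def Iq : HC := ⟨0, 1, 0, 0⟩
/-- The quaternion unit J. -/
def Jq : HC := ⟨0, 0, 1, 0⟩
/-- The quaternion unit K. -/
def Kq : HC := ⟨0, 0, 0, 1⟩

/-- e₁ = (1 + iI)/2. -/
def e1 : HC := (2 : ℂ)⁻¹ • (1 + Complex.I • Iq)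
/-- e₂ = (1 - iI)/2. -/
def e2 : HC := (2 : ℂ)⁻¹ • (1 - Complex.I • Iq)
/-- e₃ = (iJ - K)/2. -/
def e3 : HC := (2 : ℂ)⁻¹ • (Complex.I • Jq - Kq)
/-- e₄ = (iJ + K)/2. -/
def e4 : HC := (2 : ℂ)⁻¹ • (Complex.I • Jq + Kq)

/-- The coefficient c₁ of q in the basis {e₁,e₂,e₃,e₄} (q = c₁e₁ + c₂e₂ + c₃e₃ + c₄e₄). -/
def coord1 (q : HC) : ℂ := q.re - Complex.I * q.imI
/-- The coefficient c₂ of q in the basis {e₁,e₂,e₃,e₄}. -/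
def coord2 (q : HC) : ℂ := q.re + Complex.I * q.imI
/-- The coefficient c₃ of q in the basis {e₁,e₂,e₃,e₄}. -/
def coord3 (q : HC) : ℂ := -(Complex.I * q.imJ) - q.imK
/-- The coefficient c₄ of q in the basis {e₁,e₂,e₃,e₄}. -/
def coord4 (q : HC) : ℂ := -(Complex.I * q.imJ) + q.imK

/-- The norm ‖c‖ = √(|c₁|² + |c₂|² + |c₃|² + |c₄|²) of c = c₁e₁ + c₂e₂ + c₃e₃ + c₄e₄. -/
def hnorm (q : HC) : ℝ :=
  Real.sqrt (‖(coord1 q)‖ ^ 2 + ‖(coord2 q)‖ ^ 2 +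
    ‖(coord3 q)‖ ^ 2 + ‖(coord4 q)‖ ^ 2)

/-- i₂ = a₁e₁ + a₂e₂. -/
def i2 (a₁ a₂ : ℂ) : HC := a₁ • e1 + a₂ • e2
/-- i₃ = b₁e₁ + b₂e₂. -/
def i3 (b₁ b₂ : ℂ) : HC := b₁ • e1 + b₂ • e2

/-- ζ = x·i₁ + y·i₂ + z·i₃ with i₁ = 1. -/
def zeta (a₁ a₂ b₁ b₂ : ℂ) (x y z : ℝ) : HC :=
  (x : ℂ) • (1 : HC) + (y : ℂ) • i2 a₁ a₂ + (z : ℂ) • i3 b₁ b₂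

/-- E₃ = {x i₁ + y i₂ + z i₃ : x, y, z ∈ ℝ}. -/
def E3 (a₁ a₂ b₁ b₂ : ℂ) : Set HC :=
  {q | ∃ x y z : ℝ, q = zeta a₁ a₂ b₁ b₂ x y z}

/-- ξ₁ = f₁(ζ) = x + y a₁ + z b₁. -/
def xi1 (a₁ b₁ : ℂ) (x y z : ℝ) : ℂ := (x : ℂ) + (y : ℂ) * a₁ + (z : ℂ) * b₁
/-- ξ₂ = f₂(ζ) = x + y a₂ + z b₂. -/
def xi2 (a₂ b₂ : ℂ) (x y z : ℝ) : ℂ := (x : ℂ) + (y : ℂ) * a₂ + (z : ℂ) * b₂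


/-- The punctured domain K⁰_ζ = {ζ ∈ E₃ : 0 < |f₁(ζ)-ξ₁₀| < R, 0 < |f₂(ζ)-ξ₂₀| < R}. -/
def K0 (a₁ a₂ b₁ b₂ ξ₁₀ ξ₂₀ : ℂ) (R : ENNReal) : Set HC :=
  {q | ∃ x y z : ℝ, q = zeta a₁ a₂ b₁ b₂ x y z ∧
    0 < ‖(xi1 a₁ b₁ x y z - ξ₁₀)‖ ∧
    ENNReal.ofReal (‖(xi1 a₁ b₁ x y z - ξ₁₀)‖) < R ∧
    0 < ‖(xi2 a₂ b₂ x y z - ξ₂₀)‖ ∧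
    ENNReal.ofReal (‖(xi2 a₂ b₂ x y z - ξ₂₀)‖) < R}

/-- Φ has the finite limit A as ζ → w with ζ ranging over S (w.r.t. the norm of ℍ(ℂ)). -/
def TendstoAt (Φ : HC → HC) (S : Set HC) (w A : HC) : Prop :=
  ∀ ε > (0 : ℝ), ∃ δ > (0 : ℝ), ∀ q ∈ S, hnorm (q - w) < δ → hnorm (Φ q - A) < ε

/-- ‖Φ(ζ)‖ → ∞ as ζ → w with ζ ranging over S. -/
def TendstoInftyAt (Φ : HC → HC) (S : Set HC) (w : HC) : Prop :=
  ∀ M : ℝ, ∃ δ > (0 : ℝ), ∀ q ∈ S, hnorm (q - w) < δ → M < hnorm (Φ q)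

-- coordinate lemmas
lemma coord1_zeta (a₁ a₂ b₁ b₂ : ℂ) (x y z : ℝ) :
    coord1 (zeta a₁ a₂ b₁ b₂ x y z) = xi1 a₁ b₁ x y z := by
  simp only [coord1, zeta, i2, i3, e1, e2, e3, e4, xi1]
  simp only [Quaternion.re_add, Quaternion.re_sub, Quaternion.re_smul, Quaternion.imI_add, Quaternion.imI_sub, Quaternion.imI_smul, Quaternion.imJ_add, Quaternion.imJ_sub, Quaternion.imJ_smul, Quaternion.imK_add, Quaternion.imK_sub, Quaternion.imK_smul, Quaternion.re_one, Quaternion.imI_one, Quaternion.imJ_one, Quaternion.imK_one, QuaternionAlgebra.smul_mk, smul_eq_mul]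
  simp only [Iq, Jq, Kq]
  ring_nf
  rw [Complex.I_sq]
  ring

lemma coord2_zeta (a₁ a₂ b₁ b₂ : ℂ) (x y z : ℝ) :
    coord2 (zeta a₁ a₂ b₁ b₂ x y z) = xi2 a₂ b₂ x y z := by
  simp only [coord2, zeta, i2, i3, e1, e2, e3, e4, xi2]
  simp only [Quaternion.re_add, Quaternion.re_sub, Quaternion.re_smul, Quaternion.imI_add, Quaternion.imI_sub, Quaternion.imI_smul, Quaternion.imJ_add, Quaternion.imJ_sub, Quaternion.imJ_smul, Quaternion.imK_add, Quaternion.imK_sub, Quaternion.imK_smul, Quaternion.re_one, Quaternion.imI_one, Quaternion.imJ_one, Quaternion.imK_one, QuaternionAlgebra.smul_mk, smul_eq_mul]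
  simp only [Iq, Jq, Kq]
  ring_nf
  rw [Complex.I_sq]
  ring

lemma coord1_val (c₁ c₂ c₃ c₄ : ℂ) :
    coord1 (c₁ • e1 + c₂ • e2 + c₃ • e3 + c₄ • e4) = c₁ := by
  simp only [coord1, e1, e2, e3, e4]
  simp only [Quaternion.re_add, Quaternion.re_sub, Quaternion.re_smul, Quaternion.imI_add, Quaternion.imI_sub, Quaternion.imI_smul, Quaternion.imJ_add, Quaternion.imJ_sub, Quaternion.imJ_smul, Quaternion.imK_add, Quaternion.imK_sub, Quaternion.imK_smul, Quaternion.re_one, Quaternion.imI_one, Quaternion.imJ_one, Quaternion.imK_one, QuaternionAlgebra.smul_mk, smul_eq_mul]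
  simp only [Iq, Jq, Kq]
  ring_nf
  rw [Complex.I_sq]
  ring

lemma coord2_val (c₁ c₂ c₃ c₄ : ℂ) :
    coord2 (c₁ • e1 + c₂ • e2 + c₃ • e3 + c₄ • e4) = c₂ := by
  simp only [coord2, e1, e2, e3, e4]
  simp only [Quaternion.re_add, Quaternion.re_sub, Quaternion.re_smul, Quaternion.imI_add, Quaternion.imI_sub, Quaternion.imI_smul, Quaternion.imJ_add, Quaternion.imJ_sub, Quaternion.imJ_smul, Quaternion.imK_add, Quaternion.imK_sub, Quaternion.imK_smul, Quaternion.re_one, Quaternion.imI_one, Quaternion.imJ_one, Quaternion.imK_one, QuaternionAlgebra.smul_mk, smul_eq_mul]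
  simp only [Iq, Jq, Kq]
  ring_nf
  rw [Complex.I_sq]
  ring

lemma coord3_val (c₁ c₂ c₃ c₄ : ℂ) :
    coord3 (c₁ • e1 + c₂ • e2 + c₃ • e3 + c₄ • e4) = c₃ := by
  simp only [coord3, e1, e2, e3, e4]
  simp only [Quaternion.re_add, Quaternion.re_sub, Quaternion.re_smul, Quaternion.imI_add, Quaternion.imI_sub, Quaternion.imI_smul, Quaternion.imJ_add, Quaternion.imJ_sub, Quaternion.imJ_smul, Quaternion.imK_add, Quaternion.imK_sub, Quaternion.imK_smul, Quaternion.re_one, Quaternion.imI_one, Quaternion.imJ_one, Quaternion.imK_one, QuaternionAlgebra.smul_mk, smul_eq_mul]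
  simp only [Iq, Jq, Kq]
  ring_nf
  rw [Complex.I_sq]
  ring

lemma coord4_val (c₁ c₂ c₃ c₄ : ℂ) :
    coord4 (c₁ • e1 + c₂ • e2 + c₃ • e3 + c₄ • e4) = c₄ := by
  simp only [coord4, e1, e2, e3, e4]
  simp only [Quaternion.re_add, Quaternion.re_sub, Quaternion.re_smul, Quaternion.imI_add, Quaternion.imI_sub, Quaternion.imI_smul, Quaternion.imJ_add, Quaternion.imJ_sub, Quaternion.imJ_smul, Quaternion.imK_add, Quaternion.imK_sub, Quaternion.imK_smul, Quaternion.re_one, Quaternion.imI_one, Quaternion.imJ_one, Quaternion.imK_one, QuaternionAlgebra.smul_mk, smul_eq_mul]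
  simp only [Iq, Jq, Kq]
  ring_nf
  rw [Complex.I_sq]
  ring

lemma coord1_sub (p q : HC) : coord1 (p - q) = coord1 p - coord1 q := by
  simp [coord1]; ring

lemma coord2_sub (p q : HC) : coord2 (p - q) = coord2 p - coord2 q := by
  simp [coord2]; ring

lemma zeta_add (a₁ a₂ b₁ b₂ : ℂ) (x y z u v t : ℝ) :
    zeta a₁ a₂ b₁ b₂ x y z + zeta a₁ a₂ b₁ b₂ u v t =
    zeta a₁ a₂ b₁ b₂ (x + u) (y + v) (z + t) := by
  simp only [zeta]
  push_cast
  module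

lemma abs_coord1_le_hnorm (q : HC) : ‖(coord1 q)‖ ≤ hnorm q := by
  rw [hnorm, Real.le_sqrt (norm_nonneg _)]
  nlinarith [sq_nonneg (‖(coord2 q)‖), sq_nonneg (‖(coord3 q)‖), sq_nonneg (‖(coord4 q)‖)]
  positivity

lemma abs_coord2_le_hnorm (q : HC) : ‖(coord2 q)‖ ≤ hnorm q := by
  rw [hnorm, Real.le_sqrt (norm_nonneg _)]
  nlinarith [sq_nonneg (‖(coord1 q)‖), sq_nonneg (‖(coord3 q)‖), sq_nonneg (‖(coord4 q)‖)]
  positivity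

lemma abs_coord3_le_hnorm (q : HC) : ‖(coord3 q)‖ ≤ hnorm q := by
  rw [hnorm, Real.le_sqrt (norm_nonneg _)]
  nlinarith [sq_nonneg (‖(coord1 q)‖), sq_nonneg (‖(coord2 q)‖), sq_nonneg (‖(coord4 q)‖)]
  positivity

lemma abs_coord4_le_hnorm (q : HC) : ‖(coord4 q)‖ ≤ hnorm q := by
  rw [hnorm, Real.le_sqrt (norm_nonneg _)]
  nlinarith [sq_nonneg (‖(coord1 q)‖), sq_nonneg (‖(coord2 q)‖), sq_nonneg (‖(coord3 q)‖)]
  positivity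
lemma xi1_add (a₁ b₁ : ℂ) (x y z u v t : ℝ) :
    xi1 a₁ b₁ (x + u) (y + v) (z + t) = xi1 a₁ b₁ x y z + xi1 a₁ b₁ u v t := by
  simp only [xi1]
  push_cast
  ring

lemma xi2_add (a₂ b₂ : ℂ) (x y z u v t : ℝ) :
    xi2 a₂ b₂ (x + u) (y + v) (z + t) = xi2 a₂ b₂ x y z + xi2 a₂ b₂ u v t := by
  simp only [xi2]
  push_cast
  ring
/-- If a Laurent series with finitely many (and at least one) negative-index nonzero
coefficients converges to `F` on a punctured disc, then `|F| → ∞` at the center. -/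
lemma pole_blowup (ξ₀ : ℂ) (R : ENNReal) (hR : 0 < R) (F : ℂ → ℂ) (g : ℤ → ℂ)
    (hsum : ∀ ξ : ℂ, 0 < ‖(ξ - ξ₀)‖ → ENNReal.ofReal (‖(ξ - ξ₀)‖) < R →
      HasSum (fun n : ℤ => g n * (ξ - ξ₀) ^ n) (F ξ))
    (hfin : ∃ N : ℤ, ∀ n : ℤ, n < N → g n = 0)
    (hnz : ∃ n : ℤ, n < 0 ∧ g n ≠ 0) :
    ∀ M : ℝ, ∃ δ > (0:ℝ), ∀ ξ : ℂ, 0 < ‖(ξ - ξ₀)‖ →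
      ENNReal.ofReal (‖(ξ - ξ₀)‖) < R →
      ‖(ξ - ξ₀)‖ < δ → M < ‖(F ξ)‖ := by
  obtain ⟨N, hN⟩ := hfin
  -- least index with nonzero coefficient
  obtain ⟨n₀, hn₀, hleast⟩ := Int.exists_least_of_bdd
    (P := fun n => g n ≠ 0) ⟨N, fun z hz => le_of_not_gt (fun h => hz (hN z h))⟩
    ⟨hnz.choose, hnz.choose_spec.2⟩
  have hn₀neg : n₀ < 0 := lt_of_le_of_lt (hleast _ hnz.choose_spec.2) hnz.choose_spec.1
  have hzero : ∀ n : ℤ, n < n₀ → g n = 0 := by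
    intro n hn
    by_contra h
    exact absurd (hleast n h) (not_le.2 hn)
  set G : ℕ → ℂ := fun k => g (n₀ + k) with hG
  -- shifted natural-indexed sum
  have key : ∀ t : ℂ, t ≠ 0 → ENNReal.ofReal (‖t‖) < R →
      HasSum (fun k : ℕ => G k * t ^ k) (F (ξ₀ + t) * t ^ (-n₀)) := by
    intro t ht htR
    have h0 : 0 < ‖((ξ₀ + t) - ξ₀)‖ := by
      simpa using norm_pos_iff.mpr ht
    have h1 : ENNReal.ofReal (‖((ξ₀ + t) - ξ₀)‖) < R := by simpa using htR
    have hs := (hsum (ξ₀ + t) h0 h1).mul_right (t ^ (-n₀))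
    have hs2 : HasSum (fun n : ℤ => g n * t ^ (n - n₀)) (F (ξ₀ + t) * t ^ (-n₀)) := by
      have heq : ∀ n : ℤ, g n * ((ξ₀ + t) - ξ₀) ^ n * t ^ (-n₀) = g n * t ^ (n - n₀) := by
        intro n
        rw [add_sub_cancel_left, mul_assoc, ← zpow_add₀ ht, sub_eq_add_neg]
      simpa only [heq] using hs
    have hinj : Function.Injective (fun k : ℕ => n₀ + (k : ℤ)) := by
      intro m n h
      simpa using h
    have hrange : ∀ n : ℤ, n ∉ Set.range (fun k : ℕ => n₀ + (k : ℤ)) →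
        g n * t ^ (n - n₀) = 0 := by
      intro n hn
      have : n < n₀ := by
        by_contra h
        push_neg at h
        refine absurd ⟨(n - n₀).toNat, ?_⟩ hn
        show n₀ + ((n - n₀).toNat : ℤ) = n
        omega
      rw [hzero n this, zero_mul]
    have hfin := (Function.Injective.hasSum_iff hinj hrange).2 hs2
    have heq2 : ∀ k : ℕ, ((fun n : ℤ => g n * t ^ (n - n₀)) ∘ fun k : ℕ => n₀ + (k : ℤ)) k
        = G k * t ^ k := by
      intro k
      show g (n₀ + k) * t ^ (n₀ + (k:ℤ) - n₀) = G k * t ^ k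
      rw [add_sub_cancel_left, zpow_natCast, hG]
    exact funext heq2 ▸ hfin
  -- pick a radius r with 0 < r, ofReal r < R
  obtain ⟨r', hr'0, hr'R⟩ := exists_between hR
  have hr'top : r' ≠ ⊤ := (hr'R.trans_le le_top).ne
  set r : ℝ := r'.toReal with hr
  have hr0 : 0 < r := ENNReal.toReal_pos hr'0.ne' hr'top
  have hrR : ENNReal.ofReal r < R := by rwa [hr, ENNReal.ofReal_toReal hr'top]
  -- coefficients bounded: |G k| * r^k ≤ C
  have hsumr := key r (by exact_mod_cast hr0.ne') (by rwa [Complex.norm_real, Real.norm_of_nonneg hr0.le])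
  have hsummr : Summable (fun k : ℕ => G k * (r:ℂ) ^ k) := hsumr.summable
  have htend := hsummr.tendsto_atTop_zero.norm
  rw [norm_zero] at htend
  obtain ⟨C₀, hC₀⟩ := htend.bddAbove_range
  set C : ℝ := max C₀ 1 with hC
  have hC1 : 1 ≤ C := le_max_right _ _
  have hCpos : 0 < C := lt_of_lt_of_le one_pos hC1
  have hbound : ∀ k : ℕ, ‖(G k)‖ * r ^ k ≤ C := by
    intro k
    have h1 : ‖G k * (r:ℂ) ^ k‖ ≤ C₀ := hC₀ ⟨k, rfl⟩
    calc ‖(G k)‖ * r ^ k = ‖G k * (r:ℂ) ^ k‖ := by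
          simp [norm_mul, norm_pow, abs_of_pos hr0]
      _ ≤ C₀ := h1
      _ ≤ C := le_max_left _ _
  have hG0 : G 0 ≠ 0 := by simpa [hG] using hn₀
  set A : ℝ := ‖(G 0)‖ with hA
  have hApos : 0 < A := norm_pos_iff.mpr hG0
  -- main estimate on the regular part
  have hreg : ∀ t : ℂ, t ≠ 0 → ENNReal.ofReal (‖t‖) < R →
      ‖t‖ ≤ r / 2 →
      ‖(F (ξ₀ + t) * t ^ (-n₀) - G 0)‖ ≤ (4 * C / r) * ‖t‖ := by
    intro t ht htR htr
    have hk := key t ht htR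
    have hk' : HasSum (fun k : ℕ => G (k + 1) * t ^ (k + 1))
        (F (ξ₀ + t) * t ^ (-n₀) - G 0) := by
      have h2 := (hasSum_nat_add_iff' (f := fun k : ℕ => G k * t ^ k) 1).2 hk
      simpa using h2
    have hterm : ∀ k : ℕ, ‖G (k + 1) * t ^ (k + 1)‖ ≤
        ((2 * C / r) * ‖t‖) * (1 / 2) ^ k := by
      intro k
      have h1 : ‖(G (k+1))‖ ≤ C / r ^ (k+1) := by
        rw [le_div_iff₀ (by positivity)]
        exact hbound (k+1)
      have h2 : ‖G (k + 1) * t ^ (k + 1)‖ = ‖(G (k+1))‖ * ‖t‖ ^ (k+1) := by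
        simp [norm_mul, norm_pow]
      rw [h2]
      have h3 : ‖(G (k+1))‖ * ‖t‖ ^ (k+1) ≤
          (C / r ^ (k+1)) * ‖t‖ ^ (k+1) :=
        mul_le_mul_of_nonneg_right h1 (by positivity)
      refine h3.trans ?_
      rw [div_mul_eq_mul_div, div_le_iff₀ (by positivity)]
      have habs0 : 0 ≤ ‖t‖ := norm_nonneg t
      have hrec : ‖t‖ ^ k ≤ (r/2) ^ k := pow_le_pow_left₀ habs0 htr k
      calc C * ‖t‖ ^ (k+1) = C * ‖t‖ * ‖t‖ ^ k := by ring
        _ ≤ C * ‖t‖ * (r/2) ^ k :=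
            mul_le_mul_of_nonneg_left hrec (by positivity)
        _ = 2 * C / r * ‖t‖ * (1 / 2) ^ k * r ^ (k+1) / 2 := by
            field_simp
            ring
        _ ≤ 2 * C / r * ‖t‖ * (1 / 2) ^ k * r ^ (k+1) := by
            have h5 : 0 ≤ 2 * C / r * ‖t‖ * (1 / 2) ^ k * r ^ (k+1) := by positivity
            linarith
    have hgeo : HasSum (fun k : ℕ => ((2 * C / r) * ‖t‖) * (1 / 2) ^ k)
        (((2 * C / r) * ‖t‖) * 2) := by
      have hg := hasSum_geometric_of_lt_one (by norm_num : (0:ℝ) ≤ 1/2)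
        (by norm_num : (1:ℝ)/2 < 1)
      have h2 : (1 - 1/2 : ℝ)⁻¹ = 2 := by norm_num
      rw [h2] at hg
      exact hg.mul_left _
    have hsgeo : Summable (fun k : ℕ => ((2 * C / r) * ‖t‖) * (1/2:ℝ) ^ k) :=
      hgeo.summable
    have hsn : Summable (fun k : ℕ => ‖G (k + 1) * t ^ (k + 1)‖) :=
      Summable.of_nonneg_of_le (fun k => norm_nonneg _) hterm hsgeo
    calc ‖(F (ξ₀ + t) * t ^ (-n₀) - G 0)‖
        = ‖∑' k : ℕ, G (k + 1) * t ^ (k + 1)‖ := by rw [hk'.tsum_eq]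
      _ ≤ ∑' k : ℕ, ‖G (k + 1) * t ^ (k + 1)‖ := norm_tsum_le_tsum_norm hsn
      _ ≤ ∑' k : ℕ, ((2 * C / r) * ‖t‖) * (1/2:ℝ) ^ k :=
          Summable.tsum_le_tsum hterm hsn hsgeo
      _ = ((2 * C / r) * ‖t‖) * 2 := hgeo.tsum_eq
      _ = (4 * C / r) * ‖t‖ := by ring
  -- conclusion
  intro M
  set B : ℝ := max M 0 + 1 with hB
  have hBpos : 0 < B := by positivity
  set δ₁ : ℝ := A / (2 * B) with hδ₁
  have hδ₁pos : 0 < δ₁ := by positivity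
  refine ⟨min 1 (min (r/2) (min (A * r / (8 * C)) δ₁)), by positivity, ?_⟩
  intro ξ hpos hRξ hlt
  set t : ℂ := ξ - ξ₀ with htdef
  have ht : t ≠ 0 := by
    intro h
    rw [h] at hpos
    simp at hpos
  have hξ : ξ₀ + t = ξ := by rw [htdef]; ring
  have habs : ‖t‖ < min 1 (min (r/2) (min (A * r / (8 * C)) δ₁)) := hlt
  have h1 : ‖t‖ < 1 := lt_of_lt_of_le habs (min_le_left _ _)
  have h2 : ‖t‖ ≤ r / 2 :=
    le_of_lt (lt_of_lt_of_le habs ((min_le_right _ _).trans (min_le_left _ _)))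
  have h3 : ‖t‖ < A * r / (8 * C) :=
    lt_of_lt_of_le habs ((min_le_right _ _).trans ((min_le_right _ _).trans (min_le_left _ _)))
  have h4 : ‖t‖ < δ₁ :=
    lt_of_lt_of_le habs ((min_le_right _ _).trans ((min_le_right _ _).trans (min_le_right _ _)))
  have htpos : 0 < ‖t‖ := norm_pos_iff.mpr ht
  have hregt := hreg t ht hRξ h2
  rw [hξ] at hregt
  -- |S| ≥ A/2 where S = F ξ * t ^ (-n₀)
  have hS : A / 2 ≤ ‖(F ξ * t ^ (-n₀))‖ := by
    have htri : A - ‖(F ξ * t ^ (-n₀) - G 0)‖ ≤ ‖(F ξ * t ^ (-n₀))‖ := by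
      have h'' := norm_sub_norm_le (G 0) (F ξ * t ^ (-n₀))
      rw [show G 0 - F ξ * t ^ (-n₀) = -(F ξ * t ^ (-n₀) - G 0) by ring, norm_neg] at h''
      linarith
    have hsmall : ‖(F ξ * t ^ (-n₀) - G 0)‖ ≤ A / 2 := by
      have := hregt
      have hle : (4 * C / r) * ‖t‖ ≤ A / 2 := by
        calc (4 * C / r) * ‖t‖ ≤ (4 * C / r) * (A * r / (8 * C)) :=
              mul_le_mul_of_nonneg_left h3.le (by positivity)
          _ = A / 2 := by field_simp; ring
      linarith
    linarith
  -- |F ξ| = |S| * |t|^{n₀} ≥ (A/2) * |t|⁻¹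
  have hFξ : ‖(F ξ)‖ = ‖(F ξ * t ^ (-n₀))‖ * ‖t‖ ^ n₀ := by
    rw [norm_mul, norm_zpow, mul_assoc, ← zpow_add₀ (norm_ne_zero_iff.mpr ht)]
    simp
  have hzp : ‖t‖ ^ n₀ ≥ (‖t‖)⁻¹ := by
    have hm : n₀ ≤ -1 := by omega
    have : ‖t‖ ^ n₀ = ((‖t‖) ^ (-n₀).toNat)⁻¹ := by
      rw [← zpow_natCast (‖t‖) (-n₀).toNat, ← zpow_neg]
      congr 1
      omega
    rw [this, ge_iff_le]
    have hpowle : ‖t‖ ^ (-n₀).toNat ≤ ‖t‖ := by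
      calc ‖t‖ ^ (-n₀).toNat ≤ ‖t‖ ^ 1 := by
            apply pow_le_pow_of_le_one htpos.le h1.le
            omega
        _ = ‖t‖ := pow_one _
    exact inv_anti₀ (by positivity) hpowle
  have hfinal : (A / 2) * (‖t‖)⁻¹ ≤ ‖(F ξ)‖ := by
    rw [hFξ]
    have h0 : (0:ℝ) < (‖t‖)⁻¹ := by positivity
    calc (A / 2) * (‖t‖)⁻¹ ≤ ‖(F ξ * t ^ (-n₀))‖ * (‖t‖)⁻¹ :=
          mul_le_mul_of_nonneg_right hS h0.le
      _ ≤ ‖(F ξ * t ^ (-n₀))‖ * ‖t‖ ^ n₀ :=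
          mul_le_mul_of_nonneg_left hzp (norm_nonneg _)
  have hlast : B < (A / 2) * (‖t‖)⁻¹ := by
    have hδinv : δ₁⁻¹ < (‖t‖)⁻¹ := by
      exact inv_strictAnti₀ htpos h4
    have : (A / 2) * δ₁⁻¹ = B := by
      rw [hδ₁]
      field_simp
    calc B = (A / 2) * δ₁⁻¹ := this.symm
      _ < (A / 2) * (‖t‖)⁻¹ := by
          apply mul_lt_mul_of_pos_left hδinv (by positivity)
  have : M < B := by
    rw [hB]
    have := le_max_left M 0
    linarith
  linarith
/-- Classification of singularities, pole case: if the principal part of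
the Laurent expansion of Φ is nonzero but contains only finitely many terms, then there
is k ∈ {1,2} such that ‖Φ(ζ)‖ → ∞ as ζ → w, ζ ∈ K⁰_ζ, at every point w = ζ₀ + e* of
K̃⁰_ζ with e* ∈ L^k_ζ. -/
theorem singularity_pole
    (a₁ a₂ b₁ b₂ : ℂ)
    (hind : ∀ α β γ : ℝ,
      (α : ℂ) • (1 : HC) + (β : ℂ) • i2 a₁ a₂ + (γ : ℂ) • i3 b₁ b₂ = 0 →
        α = 0 ∧ β = 0 ∧ γ = 0)
    (hsurj1 : ∀ w : ℂ, ∃ x y z : ℝ, w = xi1 a₁ b₁ x y z)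
    (hsurj2 : ∀ w : ℂ, ∃ x y z : ℝ, w = xi2 a₂ b₂ x y z)
    (x₀ y₀ z₀ : ℝ) (R : ENNReal) (hR : 0 < R)
    (F₁ F₂ F₃ F₄ : ℂ → ℂ)
    (hF₁ : DifferentiableOn ℂ F₁
      {ξ : ℂ | 0 < ‖(ξ - xi1 a₁ b₁ x₀ y₀ z₀)‖ ∧
        ENNReal.ofReal (‖(ξ - xi1 a₁ b₁ x₀ y₀ z₀)‖) < R})
    (hF₃ : DifferentiableOn ℂ F₃
      {ξ : ℂ | 0 < ‖(ξ - xi1 a₁ b₁ x₀ y₀ z₀)‖ ∧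
        ENNReal.ofReal (‖(ξ - xi1 a₁ b₁ x₀ y₀ z₀)‖) < R})
    (hF₂ : DifferentiableOn ℂ F₂
      {ξ : ℂ | 0 < ‖(ξ - xi2 a₂ b₂ x₀ y₀ z₀)‖ ∧
        ENNReal.ofReal (‖(ξ - xi2 a₂ b₂ x₀ y₀ z₀)‖) < R})
    (hF₄ : DifferentiableOn ℂ F₄
      {ξ : ℂ | 0 < ‖(ξ - xi2 a₂ b₂ x₀ y₀ z₀)‖ ∧
        ENNReal.ofReal (‖(ξ - xi2 a₂ b₂ x₀ y₀ z₀)‖) < R})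
    (Φ : HC → HC)
    (hΦ : ∀ x y z : ℝ,
      0 < ‖(xi1 a₁ b₁ x y z - xi1 a₁ b₁ x₀ y₀ z₀)‖ →
      ENNReal.ofReal (‖(xi1 a₁ b₁ x y z - xi1 a₁ b₁ x₀ y₀ z₀)‖) < R →
      0 < ‖(xi2 a₂ b₂ x y z - xi2 a₂ b₂ x₀ y₀ z₀)‖ →
      ENNReal.ofReal (‖(xi2 a₂ b₂ x y z - xi2 a₂ b₂ x₀ y₀ z₀)‖) < R →
      Φ (zeta a₁ a₂ b₁ b₂ x y z) =
        F₁ (xi1 a₁ b₁ x y z) • e1 + F₂ (xi2 a₂ b₂ x y z) • e2 +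
        F₃ (xi1 a₁ b₁ x y z) • e3 + F₄ (xi2 a₂ b₂ x y z) • e4)
    (a b c d : ℤ → ℂ)
    (ha : ∀ ξ : ℂ, 0 < ‖(ξ - xi1 a₁ b₁ x₀ y₀ z₀)‖ →
      ENNReal.ofReal (‖(ξ - xi1 a₁ b₁ x₀ y₀ z₀)‖) < R →
      HasSum (fun n : ℤ => a n * (ξ - xi1 a₁ b₁ x₀ y₀ z₀) ^ n) (F₁ ξ))
    (hc : ∀ ξ : ℂ, 0 < ‖(ξ - xi1 a₁ b₁ x₀ y₀ z₀)‖ →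
      ENNReal.ofReal (‖(ξ - xi1 a₁ b₁ x₀ y₀ z₀)‖) < R →
      HasSum (fun n : ℤ => c n * (ξ - xi1 a₁ b₁ x₀ y₀ z₀) ^ n) (F₃ ξ))
    (hb : ∀ ξ : ℂ, 0 < ‖(ξ - xi2 a₂ b₂ x₀ y₀ z₀)‖ →
      ENNReal.ofReal (‖(ξ - xi2 a₂ b₂ x₀ y₀ z₀)‖) < R →
      HasSum (fun n : ℤ => b n * (ξ - xi2 a₂ b₂ x₀ y₀ z₀) ^ n) (F₂ ξ))
    (hd : ∀ ξ : ℂ, 0 < ‖(ξ - xi2 a₂ b₂ x₀ y₀ z₀)‖ →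
      ENNReal.ofReal (‖(ξ - xi2 a₂ b₂ x₀ y₀ z₀)‖) < R →
      HasSum (fun n : ℤ => d n * (ξ - xi2 a₂ b₂ x₀ y₀ z₀) ^ n) (F₄ ξ))
    (hfin : ∃ N : ℤ, ∀ n : ℤ, n < N → a n = 0 ∧ b n = 0 ∧ c n = 0 ∧ d n = 0)
    (hnz : ∃ n : ℤ, n < 0 ∧ (a n ≠ 0 ∨ b n ≠ 0 ∨ c n ≠ 0 ∨ d n ≠ 0)) :
    (∀ u v t : ℝ, xi1 a₁ b₁ u v t = 0 →
      ENNReal.ofReal (‖(xi1 a₁ b₁ u v t)‖) < R →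
      ENNReal.ofReal (‖(xi2 a₂ b₂ u v t)‖) < R →
      TendstoInftyAt Φ (K0 a₁ a₂ b₁ b₂ (xi1 a₁ b₁ x₀ y₀ z₀) (xi2 a₂ b₂ x₀ y₀ z₀) R)
        (zeta a₁ a₂ b₁ b₂ x₀ y₀ z₀ + zeta a₁ a₂ b₁ b₂ u v t)) ∨
    (∀ u v t : ℝ, xi2 a₂ b₂ u v t = 0 →
      ENNReal.ofReal (‖(xi1 a₁ b₁ u v t)‖) < R →
      ENNReal.ofReal (‖(xi2 a₂ b₂ u v t)‖) < R →
      TendstoInftyAt Φ (K0 a₁ a₂ b₁ b₂ (xi1 a₁ b₁ x₀ y₀ z₀) (xi2 a₂ b₂ x₀ y₀ z₀) R)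
        (zeta a₁ a₂ b₁ b₂ x₀ y₀ z₀ + zeta a₁ a₂ b₁ b₂ u v t)) := by
  by_cases hca : ∃ n : ℤ, n < 0 ∧ (a n ≠ 0 ∨ c n ≠ 0)
  · left
    have blow : ∀ M : ℝ, ∃ δ > (0:ℝ), ∀ ξ : ℂ, 0 < ‖(ξ - xi1 a₁ b₁ x₀ y₀ z₀)‖ →
        ENNReal.ofReal (‖(ξ - xi1 a₁ b₁ x₀ y₀ z₀)‖) < R →
        ‖(ξ - xi1 a₁ b₁ x₀ y₀ z₀)‖ < δ →
        M < max (‖(F₁ ξ)‖) (‖(F₃ ξ)‖) := by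
      obtain ⟨n, hn, hac⟩ := hca
      obtain ⟨N, hN⟩ := hfin
      rcases hac with h' | h'
      · intro M
        obtain ⟨δ, hδ, hh⟩ := pole_blowup _ R hR F₁ a ha
          ⟨N, fun n hn => (hN n hn).1⟩ ⟨n, hn, h'⟩ M
        exact ⟨δ, hδ, fun ξ h1 h2 h3 => lt_of_lt_of_le (hh ξ h1 h2 h3) (le_max_left _ _)⟩
      · intro M
        obtain ⟨δ, hδ, hh⟩ := pole_blowup _ R hR F₃ c hc
          ⟨N, fun n hn => (hN n hn).2.2.1⟩ ⟨n, hn, h'⟩ M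
        exact ⟨δ, hδ, fun ξ h1 h2 h3 => lt_of_lt_of_le (hh ξ h1 h2 h3) (le_max_right _ _)⟩
    intro u v t hu _hu1 _hu2 M
    obtain ⟨δ, hδ, hh⟩ := blow M
    refine ⟨δ, hδ, ?_⟩
    rintro q ⟨x, y, z, rfl, hx1, hx2, hx3, hx4⟩ hq
    have hw : zeta a₁ a₂ b₁ b₂ x₀ y₀ z₀ + zeta a₁ a₂ b₁ b₂ u v t
        = zeta a₁ a₂ b₁ b₂ (x₀ + u) (y₀ + v) (z₀ + t) := zeta_add a₁ a₂ b₁ b₂ x₀ y₀ z₀ u v t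
    have hcoord : ‖(xi1 a₁ b₁ x y z - xi1 a₁ b₁ x₀ y₀ z₀)‖ < δ := by
      have h1 : coord1 (zeta a₁ a₂ b₁ b₂ x y z
            - (zeta a₁ a₂ b₁ b₂ x₀ y₀ z₀ + zeta a₁ a₂ b₁ b₂ u v t))
          = xi1 a₁ b₁ x y z - xi1 a₁ b₁ x₀ y₀ z₀ := by
        rw [hw, coord1_sub, coord1_zeta, coord1_zeta, xi1_add, hu, add_zero]
      calc ‖(xi1 a₁ b₁ x y z - xi1 a₁ b₁ x₀ y₀ z₀)‖
          = ‖(coord1 (zeta a₁ a₂ b₁ b₂ x y z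
              - (zeta a₁ a₂ b₁ b₂ x₀ y₀ z₀ + zeta a₁ a₂ b₁ b₂ u v t)))‖ := by rw [h1]
        _ ≤ hnorm (zeta a₁ a₂ b₁ b₂ x y z
              - (zeta a₁ a₂ b₁ b₂ x₀ y₀ z₀ + zeta a₁ a₂ b₁ b₂ u v t)) :=
            abs_coord1_le_hnorm _
        _ < δ := hq
    have hmax := hh (xi1 a₁ b₁ x y z) hx1 hx2 hcoord
    have hΦq := hΦ x y z hx1 hx2 hx3 hx4
    rw [hΦq]
    refine lt_of_lt_of_le hmax (max_le ?_ ?_)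
    · calc ‖(F₁ (xi1 a₁ b₁ x y z))‖
          = ‖(coord1 (F₁ (xi1 a₁ b₁ x y z) • e1 + F₂ (xi2 a₂ b₂ x y z) • e2 +
            F₃ (xi1 a₁ b₁ x y z) • e3 + F₄ (xi2 a₂ b₂ x y z) • e4))‖ := by rw [coord1_val]
        _ ≤ _ := abs_coord1_le_hnorm _
    · calc ‖(F₃ (xi1 a₁ b₁ x y z))‖
          = ‖(coord3 (F₁ (xi1 a₁ b₁ x y z) • e1 + F₂ (xi2 a₂ b₂ x y z) • e2 +
            F₃ (xi1 a₁ b₁ x y z) • e3 + F₄ (xi2 a₂ b₂ x y z) • e4))‖ := by rw [coord3_val]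
        _ ≤ _ := abs_coord3_le_hnorm _
  · right
    push_neg at hca
    have hbd : ∃ n : ℤ, n < 0 ∧ (b n ≠ 0 ∨ d n ≠ 0) := by
      obtain ⟨n, hn, h4⟩ := hnz
      have hac' := hca n hn
      rcases h4 with h | h | h | h
      · exact absurd hac'.1 h
      · exact ⟨n, hn, Or.inl h⟩
      · exact absurd hac'.2 h
      · exact ⟨n, hn, Or.inr h⟩
    have blow : ∀ M : ℝ, ∃ δ > (0:ℝ), ∀ ξ : ℂ, 0 < ‖(ξ - xi2 a₂ b₂ x₀ y₀ z₀)‖ →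
        ENNReal.ofReal (‖(ξ - xi2 a₂ b₂ x₀ y₀ z₀)‖) < R →
        ‖(ξ - xi2 a₂ b₂ x₀ y₀ z₀)‖ < δ →
        M < max (‖(F₂ ξ)‖) (‖(F₄ ξ)‖) := by
      obtain ⟨n, hn, hbd'⟩ := hbd
      obtain ⟨N, hN⟩ := hfin
      rcases hbd' with h' | h'
      · intro M
        obtain ⟨δ, hδ, hh⟩ := pole_blowup _ R hR F₂ b hb
          ⟨N, fun n hn => (hN n hn).2.1⟩ ⟨n, hn, h'⟩ M
        exact ⟨δ, hδ, fun ξ h1 h2 h3 => lt_of_lt_of_le (hh ξ h1 h2 h3) (le_max_left _ _)⟩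
      · intro M
        obtain ⟨δ, hδ, hh⟩ := pole_blowup _ R hR F₄ d hd
          ⟨N, fun n hn => (hN n hn).2.2.2⟩ ⟨n, hn, h'⟩ M
        exact ⟨δ, hδ, fun ξ h1 h2 h3 => lt_of_lt_of_le (hh ξ h1 h2 h3) (le_max_right _ _)⟩
    intro u v t hu _hu1 _hu2 M
    obtain ⟨δ, hδ, hh⟩ := blow M
    refine ⟨δ, hδ, ?_⟩
    rintro q ⟨x, y, z, rfl, hx1, hx2, hx3, hx4⟩ hq
    have hw : zeta a₁ a₂ b₁ b₂ x₀ y₀ z₀ + zeta a₁ a₂ b₁ b₂ u v t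
        = zeta a₁ a₂ b₁ b₂ (x₀ + u) (y₀ + v) (z₀ + t) := zeta_add a₁ a₂ b₁ b₂ x₀ y₀ z₀ u v t
    have hcoord : ‖(xi2 a₂ b₂ x y z - xi2 a₂ b₂ x₀ y₀ z₀)‖ < δ := by
      have h1 : coord2 (zeta a₁ a₂ b₁ b₂ x y z
            - (zeta a₁ a₂ b₁ b₂ x₀ y₀ z₀ + zeta a₁ a₂ b₁ b₂ u v t))
          = xi2 a₂ b₂ x y z - xi2 a₂ b₂ x₀ y₀ z₀ := by
        rw [hw, coord2_sub, coord2_zeta, coord2_zeta, xi2_add, hu, add_zero]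
      calc ‖(xi2 a₂ b₂ x y z - xi2 a₂ b₂ x₀ y₀ z₀)‖
          = ‖(coord2 (zeta a₁ a₂ b₁ b₂ x y z
              - (zeta a₁ a₂ b₁ b₂ x₀ y₀ z₀ + zeta a₁ a₂ b₁ b₂ u v t)))‖ := by rw [h1]
        _ ≤ hnorm (zeta a₁ a₂ b₁ b₂ x y z
              - (zeta a₁ a₂ b₁ b₂ x₀ y₀ z₀ + zeta a₁ a₂ b₁ b₂ u v t)) :=
            abs_coord2_le_hnorm _
        _ < δ := hq
    have hmax := hh (xi2 a₂ b₂ x y z) hx3 hx4 hcoord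
    have hΦq := hΦ x y z hx1 hx2 hx3 hx4
    rw [hΦq]
    refine lt_of_lt_of_le hmax (max_le ?_ ?_)
    · calc ‖(F₂ (xi2 a₂ b₂ x y z))‖
          = ‖(coord2 (F₁ (xi1 a₁ b₁ x y z) • e1 + F₂ (xi2 a₂ b₂ x y z) • e2 +
            F₃ (xi1 a₁ b₁ x y z) • e3 + F₄ (xi2 a₂ b₂ x y z) • e4))‖ := by rw [coord2_val]
        _ ≤ _ := abs_coord2_le_hnorm _
    · calc ‖(F₄ (xi2 a₂ b₂ x y z))‖
          = ‖(coord4 (F₁ (xi1 a₁ b₁ x y z) • e1 + F₂ (xi2 a₂ b₂ x y z) • e2 +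
            F₃ (xi1 a₁ b₁ x y z) • e3 + F₄ (xi2 a₂ b₂ x y z) • e4))‖ := by rw [coord4_val]
        _ ≤ _ := abs_coord4_le_hnorm _
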